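/- Let d, T ≥ 1 be integers, λ > 0, L > 0, ρ > 0. Let x_1, …, x_T ∈ ℝ^d satisfy ‖x_t‖₂ ≤ L for all t, and define V_t := λ I_d + Σ_{i=1}^{t-1} x_i x_iᵀ. Let τ' := { t ∈ {1,…,T} : ‖x_t‖_{V_t^{-1}} ≥ ρ }. Then the cardinality of τ' satisfies |τ'| ≤ (3 d / log(1 + ρ²)) · log( 1 + L² / ( λ · log(1 + ρ²) ) ). -/

import Mathlib

open Matrix Finset

/-- Weighted norm ‖x‖_V := √(xᵀ V x). -/
noncomputable def wnorm {d : ℕ} (V : Matrix (Fin d) (Fin d) ℝ) (x : Fin d → ℝ) : ℝ :=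
  Real.sqrt (x ⬝ᵥ (V *ᵥ x))

/-- Euclidean norm on ℝ^d. -/
noncomputable def enorm2 {d : ℕ} (x : Fin d → ℝ) : ℝ :=
  Real.sqrt (∑ i, (x i) ^ 2)

set_option linter.unusedVariables false


variable {d : ℕ}

lemma vmv_mulVec (x y : Fin d → ℝ) : (vecMulVec x x) *ᵥ y = (x ⬝ᵥ y) • x := by
  ext i; simp [mulVec, vecMulVec_apply, dotProduct, Finset.mul_sum, mul_assoc,
    Finset.sum_mul, mul_comm, mul_left_comm]

lemma vmv_quad (x y : Fin d → ℝ) : y ⬝ᵥ ((vecMulVec x x) *ᵥ y) = (x ⬝ᵥ y) ^ 2 := by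
  rw [vmv_mulVec]
  simp only [dotProduct_smul, smul_eq_mul]
  rw [dotProduct_comm y x, sq]

lemma vmv_posSemidef (x : Fin d → ℝ) : (vecMulVec x x).PosSemidef := by
  rw [posSemidef_iff_dotProduct_mulVec]
  constructor
  · ext i j; simp [vecMulVec_apply, conjTranspose_apply, mul_comm]
  · intro y
    simp only [star_trivial]
    rw [vmv_quad]; positivity

lemma smul_one_posDef {lam : ℝ} (hlam : 0 < lam) :
    (lam • (1 : Matrix (Fin d) (Fin d) ℝ)).PosDef := by
  rw [Matrix.smul_one_eq_diagonal]
  exact Matrix.posDef_diagonal_iff.mpr fun _ => hlam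

lemma symm_dot {A : Matrix (Fin d) (Fin d) ℝ} (hA : A.IsHermitian) (u v : Fin d → ℝ) :
    u ⬝ᵥ (A *ᵥ v) = v ⬝ᵥ (A *ᵥ u) := by
  have ht : Aᵀ = A := by
    have := hA; rwa [Matrix.IsHermitian, conjTranspose_eq_transpose_of_trivial] at this
  rw [Matrix.dotProduct_mulVec, ← Matrix.mulVec_transpose, ht, dotProduct_comm]

lemma inv_quad_mono {A B : Matrix (Fin d) (Fin d) ℝ} (hA : A.PosDef) (hB : B.PosDef)
    (hAB : ∀ y, y ⬝ᵥ (A *ᵥ y) ≤ y ⬝ᵥ (B *ᵥ y)) (x : Fin d → ℝ) :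
    x ⬝ᵥ (B⁻¹ *ᵥ x) ≤ x ⬝ᵥ (A⁻¹ *ᵥ x) := by
  set y := B⁻¹ *ᵥ x with hy
  set z := A⁻¹ *ᵥ x with hz
  have hBinv : B * B⁻¹ = 1 := Matrix.mul_nonsing_inv B (isUnit_iff_ne_zero.mpr hB.det_pos.ne')
  have hAinv : A * A⁻¹ = 1 := Matrix.mul_nonsing_inv A (isUnit_iff_ne_zero.mpr hA.det_pos.ne')
  have hBy : B *ᵥ y = x := by rw [hy, Matrix.mulVec_mulVec, hBinv, Matrix.one_mulVec]
  have hAz : A *ᵥ z = x := by rw [hz, Matrix.mulVec_mulVec, hAinv, Matrix.one_mulVec]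
  have h1 : y ⬝ᵥ (B *ᵥ y) = x ⬝ᵥ y := by rw [hBy, dotProduct_comm]
  have h2 : y ⬝ᵥ (A *ᵥ z) = x ⬝ᵥ y := by rw [hAz, dotProduct_comm]
  have h3 : z ⬝ᵥ (A *ᵥ y) = x ⬝ᵥ y := by rw [symm_dot hA.isHermitian, h2]
  have h4 : z ⬝ᵥ (A *ᵥ z) = x ⬝ᵥ z := by rw [hAz, dotProduct_comm]
  have hpsd : 0 ≤ (y - z) ⬝ᵥ (A *ᵥ (y - z)) := by
    have := (posSemidef_iff_dotProduct_mulVec.mp hA.posSemidef).2 (y - z); simpa using this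
  have hexp : (y - z) ⬝ᵥ (A *ᵥ (y - z)) =
      y ⬝ᵥ (A *ᵥ y) - 2 * (x ⬝ᵥ y) + x ⬝ᵥ z := by
    rw [Matrix.mulVec_sub, dotProduct_sub, sub_dotProduct, sub_dotProduct, h2, h3, h4]
    ring
  have hq : y ⬝ᵥ (A *ᵥ y) ≤ y ⬝ᵥ (B *ᵥ y) := hAB y
  -- x ⬝ᵥ y = y ⬝ᵥ B y ≤ ... combine
  have : 2 * (x ⬝ᵥ y) - x ⬝ᵥ z ≤ y ⬝ᵥ (A *ᵥ y) := by linarith [hpsd, hexp.symm.le, hexp.le]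
  calc x ⬝ᵥ y = 2 * (x ⬝ᵥ y) - y ⬝ᵥ (B *ᵥ y) := by rw [h1]; ring
  _ ≤ 2 * (x ⬝ᵥ y) - y ⬝ᵥ (A *ᵥ y) := by linarith
  _ ≤ x ⬝ᵥ z := by linarith

lemma det_add_vmv {A : Matrix (Fin d) (Fin d) ℝ} (hA : A.PosDef) (x : Fin d → ℝ) :
    (A + vecMulVec x x).det = A.det * (1 + x ⬝ᵥ (A⁻¹ *ᵥ x)) := by
  have hu : IsUnit A.det := isUnit_iff_ne_zero.mpr hA.det_pos.ne'
  rw [vecMulVec_eq Unit, Matrix.det_add_replicateCol_mul_replicateRow hu]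
  congr 1
  rw [Matrix.mul_assoc, ← Matrix.replicateCol_mulVec, Matrix.det_unique]
  simp [Matrix.replicateRow_mul_replicateCol_apply]

lemma amgm {n : ℕ} (hn : 0 < n) (z : Fin n → ℝ) (hz : ∀ i, 0 ≤ z i) :
    ∏ i, z i ≤ ((∑ i, z i) / n) ^ n := by
  have hw : ∑ _i : Fin n, (1 / n : ℝ) = 1 := by
    simp [Finset.sum_const, Finset.card_univ]
    field_simp
  have key := Real.geom_mean_le_arith_mean_weighted Finset.univ (fun _ => (1 / n : ℝ)) z
    (fun i _ => by positivity) hw (fun i _ => hz i)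
  have h1 : ∑ i : Fin n, (1 / n : ℝ) * z i = (∑ i, z i) / n := by
    rw [← Finset.mul_sum]; ring
  rw [h1] at key
  have h2 : ∏ i, z i = (∏ i, z i ^ (1 / n : ℝ)) ^ n := by
    rw [← Finset.prod_pow]
    congr 1; ext i
    rw [← Real.rpow_natCast (z i ^ (1/n:ℝ)) n, ← Real.rpow_mul (hz i)]
    field_simp
    simp
  rw [h2]
  exact pow_le_pow_left₀ (Finset.prod_nonneg fun i _ => Real.rpow_nonneg (hz i) _) key n

lemma trace_eq_sum_eig {A : Matrix (Fin d) (Fin d) ℝ} (hH : A.IsHermitian) :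
    A.trace = ∑ i, hH.eigenvalues i := by
  simpa using hH.trace_eq_sum_eigenvalues

lemma det_le_trace_div_pow {A : Matrix (Fin d) (Fin d) ℝ} (hd : 0 < d) (hA : A.PosSemidef) :
    A.det ≤ (A.trace / d) ^ d := by
  have hH := hA.1
  have hdet : A.det = ∏ i, hH.eigenvalues i := by
    have := hH.det_eq_prod_eigenvalues
    simpa using this
  rw [hdet, trace_eq_sum_eig hH]
  exact amgm hd _ (fun i => hA.eigenvalues_nonneg i)

lemma final_scalar {m : ℝ} (hm : 0 ≤ m) {dd a c : ℝ} (hdd : 0 < dd) (ha : 0 < a) (hc : 0 < c)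
    (h : m * a ≤ dd * Real.log (1 + m * c / dd)) :
    m ≤ 3 * dd / a * Real.log (1 + c / a) := by
  set u : ℝ := c / a with hu
  have hu0 : 0 < u := div_pos hc ha
  set M : ℝ := 3 * dd / a * Real.log (1 + u) with hM
  have hlog1u : 0 < Real.log (1 + u) := Real.log_pos (by linarith)
  have hM0 : 0 < M := by positivity
  by_contra hcon
  push_neg at hcon
  -- hcon : M < m
  have hm0 : 0 < m := lt_trans hM0 hcon
  set θ : ℝ := M / m with hθ
  have hθ0 : 0 ≤ θ := le_of_lt (div_pos hM0 hm0)
  have hθ1 : θ ≤ 1 := by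
    rw [hθ, div_le_one hm0]; exact le_of_lt hcon
  set s : ℝ := m * c / dd with hs
  have hs0 : 0 < s := by positivity
  -- Bernoulli: (1+s)^θ ≤ 1 + θ*s
  have hbern := rpow_one_add_le_one_add_mul_self (s := s) (by linarith) hθ0 hθ1
  have h1s : (0:ℝ) < 1 + s := by linarith
  have hlb : θ * Real.log (1 + s) ≤ Real.log (1 + θ * s) := by
    have hpos : (0:ℝ) < (1 + s) ^ θ := Real.rpow_pos_of_pos h1s θ
    have := Real.log_le_log hpos hbern
    rwa [Real.log_rpow h1s] at this
  have hθs : θ * s = M * c / dd := by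
    rw [hθ, hs]; field_simp
  -- from h : m*a/dd ≤ log(1+s)
  have h2 : m * a / dd ≤ Real.log (1 + s) := by
    rw [div_le_iff₀ hdd] at *
    nlinarith [h]
  have h3 : M * a / dd ≤ Real.log (1 + M * c / dd) := by
    have : θ * (m * a / dd) ≤ θ * Real.log (1 + s) :=
      mul_le_mul_of_nonneg_left h2 hθ0
    have heq : θ * (m * a / dd) = M * a / dd := by
      rw [hθ]; field_simp
    rw [heq] at this
    calc M * a / dd ≤ θ * Real.log (1 + s) := this
    _ ≤ Real.log (1 + θ * s) := hlb
    _ = Real.log (1 + M * c / dd) := by rw [hθs]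
  -- upper bound : log(1 + M*c/dd) < M*a/dd
  have hMc : M * c / dd = 3 * u * Real.log (1 + u) := by
    rw [hM, hu]; field_simp
  have hlogu : Real.log (1 + u) ≤ u := by
    have := Real.log_le_sub_one_of_pos (x := 1 + u) (by linarith)
    linarith
  have h4 : Real.log (1 + M * c / dd) < M * a / dd := by
    have hMa : M * a / dd = 3 * Real.log (1 + u) := by
      rw [hM]; field_simp
    rw [hMc, hMa]
    have step1 : Real.log (1 + 3 * u * Real.log (1 + u)) ≤ Real.log (1 + 3 * u * u) := by
      apply Real.log_le_log (by positivity)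
      nlinarith
    have step2 : Real.log (1 + 3 * u * u) < Real.log ((1 + u) ^ 3) := by
      apply Real.log_lt_log (by positivity)
      nlinarith [mul_pos (mul_pos hu0 hu0) hu0]
    rw [Real.log_pow] at step2
    push_cast at step2
    linarith
  linarith

variable {lam : ℝ} {x : ℕ → Fin d → ℝ}

noncomputable def Mmat (lam : ℝ) (x : ℕ → Fin d → ℝ) (s : Finset ℕ) : Matrix (Fin d) (Fin d) ℝ :=
  lam • (1 : Matrix (Fin d) (Fin d) ℝ) + ∑ i ∈ s, vecMulVec (x i) (x i)

lemma Mmat_posDef (hlam : 0 < lam) (s : Finset ℕ) : (Mmat lam x s).PosDef := by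
  apply (smul_one_posDef hlam).add_posSemidef
  exact Finset.sum_induction _ _ (fun a b ha hb => ha.add hb) Matrix.PosSemidef.zero
    (fun i _ => vmv_posSemidef (x i))

lemma Mmat_quad (s : Finset ℕ) (y : Fin d → ℝ) :
    y ⬝ᵥ ((Mmat lam x s) *ᵥ y) = lam * (y ⬝ᵥ y) + ∑ i ∈ s, (x i ⬝ᵥ y) ^ 2 := by
  rw [Mmat, Matrix.add_mulVec, dotProduct_add]
  congr 1
  · rw [Matrix.smul_mulVec, Matrix.one_mulVec, dotProduct_smul, smul_eq_mul]
  · induction s using Finset.induction_on with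
    | empty => simp
    | @insert a s h ih =>
      rw [Finset.sum_insert h, Finset.sum_insert h, Matrix.add_mulVec, dotProduct_add,
        vmv_quad, ih]

lemma Mmat_quad_mono (hlam : 0 < lam) {s u : Finset ℕ} (hsu : s ⊆ u) (y : Fin d → ℝ) :
    y ⬝ᵥ ((Mmat lam x s) *ᵥ y) ≤ y ⬝ᵥ ((Mmat lam x u) *ᵥ y) := by
  rw [Mmat_quad, Mmat_quad]
  have := Finset.sum_le_sum_of_subset_of_nonneg hsu (f := fun i => (x i ⬝ᵥ y) ^ 2)
    (fun i _ _ => sq_nonneg _)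
  linarith

lemma growth {ρ : ℝ} (hlam : 0 < lam) (hρ : 0 < ρ)
    (P : ℕ → Prop)
    (hP : ∀ t, P t → ρ ^ 2 ≤ (x t) ⬝ᵥ ((Mmat lam x (Finset.range t))⁻¹ *ᵥ (x t)))
    (s : Finset ℕ) (hs : ∀ t ∈ s, P t) :
    lam ^ d * (1 + ρ ^ 2) ^ s.card ≤ (Mmat lam x s).det := by
  induction s using Finset.induction_on_max with
  | empty =>
    simp only [Finset.card_empty, pow_zero, mul_one, Mmat, Finset.sum_empty, add_zero]
    rw [Matrix.det_smul, Matrix.det_one, mul_one, Fintype.card_fin]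
  | insert a s ha ih =>
    have has : a ∉ s := fun h => lt_irrefl a (ha a h)
    have hsub : s ⊆ Finset.range a := fun b hb => Finset.mem_range.mpr (ha b hb)
    have hMins : Mmat lam x (insert a s) = Mmat lam x s + vecMulVec (x a) (x a) := by
      rw [Mmat, Mmat, Finset.sum_insert has]; abel
    rw [hMins, det_add_vmv (Mmat_posDef hlam s)]
    have hq : ρ ^ 2 ≤ (x a) ⬝ᵥ ((Mmat lam x s)⁻¹ *ᵥ (x a)) := by
      refine le_trans (hP a (hs a (Finset.mem_insert_self a s))) ?_
      exact inv_quad_mono (Mmat_posDef hlam s) (Mmat_posDef hlam _)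
        (fun y => Mmat_quad_mono hlam hsub y) (x a)
    have hihs := ih (fun t ht => hs t (Finset.mem_insert_of_mem ht))
    rw [Finset.card_insert_of_notMem has, pow_succ]
    calc lam ^ d * ((1 + ρ ^ 2) ^ s.card * (1 + ρ ^ 2))
        = (lam ^ d * (1 + ρ ^ 2) ^ s.card) * (1 + ρ ^ 2) := by ring
    _ ≤ (Mmat lam x s).det * (1 + (x a) ⬝ᵥ ((Mmat lam x s)⁻¹ *ᵥ (x a))) := by
        apply mul_le_mul hihs (by linarith) (by positivity)
        exact (Mmat_posDef hlam s).det_pos.le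

theorem card_large_norm_rounds_bound (d T : ℕ) (hd : 1 ≤ d) (hT : 1 ≤ T)
    (lam L ρ : ℝ) (hlam : 0 < lam) (hL : 0 < L) (hρ : 0 < ρ)
    (x : ℕ → Fin d → ℝ) (hx : ∀ t < T, enorm2 (x t) ≤ L)
    (V : ℕ → Matrix (Fin d) (Fin d) ℝ)
    (hV : ∀ t, V t = lam • (1 : Matrix (Fin d) (Fin d) ℝ) +
      ∑ i ∈ Finset.range t, vecMulVec (x i) (x i)) :
    ((((Finset.range T).filter (fun t => ρ ≤ wnorm (V t)⁻¹ (x t))).card : ℝ)) ≤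
      3 * (d : ℝ) / Real.log (1 + ρ ^ 2) *
        Real.log (1 + L ^ 2 / (lam * Real.log (1 + ρ ^ 2))) := by
  have hα : 0 < Real.log (1 + ρ ^ 2) := Real.log_pos (by nlinarith)
  set α := Real.log (1 + ρ ^ 2) with hαdef
  set S := (Finset.range T).filter (fun t => ρ ≤ wnorm (V t)⁻¹ (x t)) with hSdef
  set m : ℕ := S.card with hmdef
  have hVM : ∀ t, V t = Mmat lam x (Finset.range t) := fun t => by rw [hV t]; rfl
  have hd0 : (0:ℝ) < d := by exact_mod_cast Nat.lt_of_lt_of_le Nat.zero_lt_one hd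
  -- quadratic form lower bound on selected rounds
  have hP : ∀ t, t ∈ S → ρ ^ 2 ≤ (x t) ⬝ᵥ ((Mmat lam x (Finset.range t))⁻¹ *ᵥ (x t)) := by
    intro t ht
    have h1 : ρ ≤ wnorm (V t)⁻¹ (x t) := (Finset.mem_filter.mp ht).2
    rw [wnorm, hVM t] at h1
    by_cases hq : 0 ≤ (x t) ⬝ᵥ ((Mmat lam x (Finset.range t))⁻¹ *ᵥ (x t))
    · exact (Real.le_sqrt hρ.le hq).mp h1
    · push_neg at hq
      rw [Real.sqrt_eq_zero_of_nonpos hq.le] at h1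
      linarith
  have hgrow := growth hlam hρ (fun t => t ∈ S) hP S (fun t ht => ht)
  -- trace bound
  have hxsq : ∀ t ∈ S, ∑ i, (x t i) ^ 2 ≤ L ^ 2 := by
    intro t ht
    have htT : t < T := Finset.mem_range.mp (Finset.mem_filter.mp ht).1
    have h1 := hx t htT
    rw [enorm2] at h1
    have h2 : ∑ i, (x t i) ^ 2 = (Real.sqrt (∑ i, (x t i) ^ 2)) ^ 2 :=
      (Real.sq_sqrt (by positivity)).symm
    rw [h2]
    exact pow_le_pow_left₀ (Real.sqrt_nonneg _) h1 2
  have htrv : ∀ t, (vecMulVec (x t) (x t)).trace = ∑ i, (x t i) ^ 2 := by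
    intro t
    simp [Matrix.trace, Matrix.diag, vecMulVec_apply, sq]
  have htr : (Mmat lam x S).trace ≤ d * lam + m * L ^ 2 := by
    rw [Mmat, Matrix.trace_add, Matrix.trace_smul, Matrix.trace_one, Matrix.trace_sum]
    have : ∑ t ∈ S, (vecMulVec (x t) (x t)).trace ≤ ∑ t ∈ S, L ^ 2 := by
      apply Finset.sum_le_sum
      intro t ht; rw [htrv t]; exact hxsq t ht
    rw [Finset.sum_const, Fintype.card_fin] at *
    simp only [smul_eq_mul, nsmul_eq_mul] at *
    linarith
  have htr0 : (0:ℝ) ≤ (Mmat lam x S).trace := by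
    rw [Mmat, Matrix.trace_add, Matrix.trace_smul, Matrix.trace_one, Matrix.trace_sum,
      Fintype.card_fin]
    have : ∀ t ∈ S, 0 ≤ (vecMulVec (x t) (x t)).trace := by
      intro t _; rw [htrv t]; positivity
    have h2 := Finset.sum_nonneg this
    simp only [smul_eq_mul] at *
    nlinarith
  have hdet2 : (Mmat lam x S).det ≤ ((d * lam + m * L ^ 2) / d) ^ d := by
    refine le_trans (det_le_trace_div_pow (Nat.lt_of_lt_of_le Nat.zero_lt_one hd)
      (Mmat_posDef hlam S).posSemidef) ?_
    apply pow_le_pow_left₀ (by positivity)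
    exact div_le_div_of_nonneg_right htr hd0.le
  -- combine into scalar inequality
  have hkey : ((m:ℝ)) * α ≤ d * Real.log (1 + (m:ℝ) * (L^2 / lam) / d) := by
    have hc1 : ((d:ℝ) * lam + m * L ^ 2) / d = lam * (1 + (m:ℝ) * (L^2/lam) / d) := by
      field_simp
    have h3 : lam ^ d * (1 + ρ ^ 2) ^ m ≤ lam ^ d * (1 + (m:ℝ) * (L^2/lam) / d) ^ d := by
      calc lam ^ d * (1 + ρ ^ 2) ^ m ≤ (Mmat lam x S).det := hgrow
      _ ≤ ((d * lam + m * L ^ 2) / d) ^ d := hdet2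
      _ = lam ^ d * (1 + (m:ℝ) * (L^2/lam) / d) ^ d := by rw [hc1, mul_pow]
    have h4 : (1 + ρ ^ 2) ^ m ≤ (1 + (m:ℝ) * (L^2/lam) / d) ^ d :=
      le_of_mul_le_mul_left (by linarith [h3]) (by positivity : (0:ℝ) < lam ^ d)
    have h5 := Real.log_le_log (by positivity) h4
    rw [Real.log_pow, Real.log_pow] at h5
    exact_mod_cast h5
  have hfin := final_scalar (Nat.cast_nonneg m) hd0 hα
    (show (0:ℝ) < L^2/lam by positivity) hkey
  calc ((m:ℝ)) ≤ 3 * (d:ℝ) / α * Real.log (1 + L^2/lam / α) := hfin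
  _ = 3 * (d : ℝ) / α * Real.log (1 + L ^ 2 / (lam * α)) := by rw [div_div]
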